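/- (Transitivity of the lifted order) The pointwise order on rational step functions, defined by f ≤ₛ g := fold⋆ (map2 (·≤·) f g), is transitive: for all f, g, h : S ℚ, f ≤ₛ g → g ≤ₛ h → f ≤ₛ h. -/

import Mathlib

set_option linter.unusedVariables false

/-- Rationals strictly between 0 and 1. -/
abbrev OO : Type := {q : ℚ // 0 < q ∧ q < 1}

/-- Rational step functions on the unit interval with values in `X`. -/
inductive S (X : Type) : Type
  | const : X → S X
  | glue : OO → S X → S X → S X

namespace S

def divO (a o : OO) (h : a.1 < o.1) : OO :=
  ⟨a.1 / o.1, div_pos a.2.1 o.2.1, (div_lt_one o.2.1).2 h⟩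

def subO (a o : OO) (h : o.1 < a.1) : OO :=
  ⟨(a.1 - o.1) / (1 - o.1),
    div_pos (by linarith) (by linarith [o.2.2]),
    (div_lt_one (by linarith [o.2.2])).2 (by linarith [a.2.2])⟩

/-- Left split: the part of the step function on `[0,a]`, rescaled to `[0,1]`. -/
def splitL {X : Type} : S X → OO → S X
  | const x, _ => const x
  | glue o f g, a =>
      if h : a.1 < o.1 then splitL f (divO a o h)
      else if h' : o.1 < a.1 then glue (divO o a h') f (splitL g (subO a o h'))
      else f

/-- Right split: the part of the step function on `[a,1]`, rescaled to `[0,1]`. -/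
def splitR {X : Type} : S X → OO → S X
  | const x, _ => const x
  | glue o f g, a =>
      if h : a.1 < o.1 then glue (subO o a h) (splitR f (divO a o h)) g
      else if h' : o.1 < a.1 then splitR g (subO a o h')
      else g

/-- The catamorphism (fold) for step functions. -/
def fold {X Y : Type} (φ : X → Y) (ψ : OO → Y → Y → Y) : S X → Y
  | const x => φ x
  | glue o f g => ψ o (fold φ ψ f) (fold φ ψ g)

/-- `map` for step functions. -/
def mapS {X Y : Type} (f : X → Y) : S X → S Y
  | const x => const (f x)
  | glue o l r => glue o (mapS f l) (mapS f r)

/-- The applicative `ap` (pointwise application) for step functions. -/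
def ap {X Y : Type} : S (X → Y) → S X → S Y
  | const f, x => mapS f x
  | glue o fl fr, x => glue o (ap fl (splitL x o)) (ap fr (splitR x o))

/-- Binary map. -/
def map2 {X Y Z : Type} (f : X → Y → Z) (a : S X) (b : S Y) : S Z :=
  ap (mapS f a) b

/-- `fold⋆`: a step function of propositions holds everywhere. -/
def foldStar : S Prop → Prop := fold id (fun _ p q => p ∧ q)

/-- Lifting of a relation to step functions: it holds pointwise everywhere. -/
def liftRel {X Y : Type} (R : X → Y → Prop) (f : S X) (g : S Y) : Prop :=
  foldStar (map2 R f g)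

/-- The equivalence `≍` on step functions: the lifting of equality. -/
def equivS {X : Type} (f g : S X) : Prop := liftRel Eq f g

def foldSup : S ℚ → ℚ := fold id (fun _ x y => max x y)

def foldAffine : S ℚ → ℚ := fold id (fun o x y => o.1 * x + (1 - o.1) * y)

def normInf (f : S ℚ) : ℚ := foldSup (mapS (fun q => |q|) f)

def normOne (f : S ℚ) : ℚ := foldAffine (mapS (fun q => |q|) f)

def dInf (f g : S ℚ) : ℚ := normInf (map2 (· - ·) f g)

def dOne (f g : S ℚ) : ℚ := normOne (map2 (· - ·) f g)

end S

open S


section PfAux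

variable {X Y Z : Type}

/-- Evaluate a step function at a point (left-closed convention at breakpoints). -/
def evalS {X : Type} : S X → ℚ → X
  | S.const x, _ => x
  | S.glue o f g, t =>
      if t < o.1 then evalS f (t / o.1) else evalS g ((t - o.1) / (1 - o.1))

theorem evalS_splitL : ∀ (x : S X) (a : OO) (t : ℚ), t < a.1 →
    evalS (splitL x a) (t / a.1) = evalS x t := by
  intro x
  induction x with
  | const x => intro a t ht; rfl
  | glue o f g ihf ihg =>
    intro a t ht
    obtain ⟨ho0, ho1⟩ := o.2
    obtain ⟨ha0, ha1⟩ := a.2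
    rw [splitL]
    rcases lt_trichotomy a.1 o.1 with hao | hao | hao
    · rw [dif_pos hao]
      have h1 : t / a.1 = (t / o.1) / ((divO a o hao).1) := by
        show _ = (t / o.1) / (a.1 / o.1)
        have : a.1 ≠ 0 := ne_of_gt ha0
        have : o.1 ≠ 0 := ne_of_gt ho0
        first
          | (field_simp; ring)
          | field_simp
      rw [h1, ihf (divO a o hao) (t / o.1) ((div_lt_div_iff_of_pos_right ho0).mpr ht)]
      show _ = if t < o.1 then _ else _
      rw [if_pos (lt_trans ht hao)]
    · rw [dif_neg (by rw [hao]; exact lt_irrefl _), dif_neg (by rw [hao]; exact lt_irrefl _)]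
      show _ = if t < o.1 then evalS f (t / o.1) else _
      rw [if_pos (hao ▸ ht), hao]
    · rw [dif_neg (not_lt.2 hao.le), dif_pos hao]
      show (if t / a.1 < o.1 / a.1 then evalS f ((t / a.1) / (o.1 / a.1))
            else evalS (splitL g (subO a o hao)) ((t / a.1 - o.1 / a.1) / (1 - o.1 / a.1)))
          = if t < o.1 then evalS f (t / o.1) else evalS g ((t - o.1) / (1 - o.1))
      by_cases hto : t < o.1
      · rw [if_pos ((div_lt_div_iff_of_pos_right ha0).mpr hto), if_pos hto]
        congr 1
        have : a.1 ≠ 0 := ne_of_gt ha0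
        have : o.1 ≠ 0 := ne_of_gt ho0
        field_simp
      · rw [if_neg (fun hc => hto ((div_lt_div_iff_of_pos_right ha0).mp hc)), if_neg hto]
        have key := ihg (subO a o hao) ((t - o.1) / (1 - o.1)) (by
          show (t - o.1) / (1 - o.1) < (a.1 - o.1) / (1 - o.1)
          exact (div_lt_div_iff_of_pos_right (by linarith)).mpr (by linarith))
        rw [← key]
        congr 1
        show (t / a.1 - o.1 / a.1) / (1 - o.1 / a.1)
            = ((t - o.1) / (1 - o.1)) / ((a.1 - o.1) / (1 - o.1))
        have h1 : a.1 ≠ 0 := ne_of_gt ha0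
        have h2 : (1 : ℚ) - o.1 ≠ 0 := by intro hc; linarith
        have h3 : a.1 - o.1 ≠ 0 := by intro hc; linarith
        have h4 : a.1 - o.1 > 0 := by linarith
        first
          | (field_simp; ring)
          | field_simp

theorem evalS_splitR : ∀ (x : S X) (a : OO) (t : ℚ), a.1 ≤ t →
    evalS (splitR x a) ((t - a.1) / (1 - a.1)) = evalS x t := by
  intro x
  induction x with
  | const x => intro a t ht; rfl
  | glue o f g ihf ihg =>
    intro a t ht
    obtain ⟨ho0, ho1⟩ := o.2
    obtain ⟨ha0, ha1⟩ := a.2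
    have h1a : (0:ℚ) < 1 - a.1 := by linarith
    have h1o : (0:ℚ) < 1 - o.1 := by linarith
    rw [splitR]
    rcases lt_trichotomy a.1 o.1 with hao | hao | hao
    · rw [dif_pos hao]
      show (if (t - a.1) / (1 - a.1) < (o.1 - a.1) / (1 - a.1) then
              evalS (splitR f (divO a o hao))
                (((t - a.1) / (1 - a.1)) / ((o.1 - a.1) / (1 - a.1)))
            else evalS g
                (((t - a.1) / (1 - a.1) - (o.1 - a.1) / (1 - a.1)) / (1 - (o.1 - a.1) / (1 - a.1))))
          = if t < o.1 then evalS f (t / o.1) else evalS g ((t - o.1) / (1 - o.1))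
      by_cases hto : t < o.1
      · rw [if_pos ((div_lt_div_iff_of_pos_right h1a).mpr (by linarith)), if_pos hto]
        have key := ihf (divO a o hao) (t / o.1) (by
          show a.1 / o.1 ≤ t / o.1
          exact (div_le_div_iff_of_pos_right ho0).mpr ht)
        rw [← key]
        congr 1
        show ((t - a.1) / (1 - a.1)) / ((o.1 - a.1) / (1 - a.1))
            = (t / o.1 - a.1 / o.1) / (1 - a.1 / o.1)
        have e1 : (1:ℚ) - a.1 ≠ 0 := ne_of_gt h1a
        have e2 : o.1 - a.1 ≠ 0 := by intro hc; linarith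
        have e3 : o.1 ≠ 0 := ne_of_gt ho0
        first
          | (field_simp; ring)
          | field_simp
      · rw [if_neg (fun hc => hto (by
          have := (div_lt_div_iff_of_pos_right h1a).mp hc; linarith)), if_neg hto]
        congr 1
        have e1 : (1:ℚ) - a.1 ≠ 0 := ne_of_gt h1a
        have e2 : (1:ℚ) - o.1 ≠ 0 := ne_of_gt h1o
        have e3 : (1:ℚ) - (o.1 - a.1) / (1 - a.1) = (1 - o.1) / (1 - a.1) := by
          field_simp
          ring
        rw [div_sub_div_same, e3, div_div_div_eq]
        first
          | (field_simp; ring)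
          | field_simp
    · rw [dif_neg (by rw [hao]; exact lt_irrefl _), dif_neg (by rw [hao]; exact lt_irrefl _)]
      show _ = if t < o.1 then _ else evalS g ((t - o.1) / (1 - o.1))
      rw [if_neg (not_lt.2 (hao ▸ ht)), hao]
    · rw [dif_neg (not_lt.2 hao.le), dif_pos hao]
      show evalS (splitR g (subO a o hao)) ((t - a.1) / (1 - a.1))
        = if t < o.1 then evalS f (t / o.1) else evalS g ((t - o.1) / (1 - o.1))
      rw [if_neg (not_lt.2 (le_trans hao.le ht))]
      have key := ihg (subO a o hao) ((t - o.1) / (1 - o.1)) (by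
        show (a.1 - o.1) / (1 - o.1) ≤ (t - o.1) / (1 - o.1)
        exact (div_le_div_iff_of_pos_right h1o).mpr (by linarith))
      rw [← key]
      congr 1
      show (t - a.1) / (1 - a.1)
        = ((t - o.1) / (1 - o.1) - (a.1 - o.1) / (1 - o.1)) / (1 - (a.1 - o.1) / (1 - o.1))
      have e1 : (1:ℚ) - o.1 ≠ 0 := ne_of_gt h1o
      have e3 : (1:ℚ) - (a.1 - o.1) / (1 - o.1) = (1 - a.1) / (1 - o.1) := by
        field_simp
        ring
      rw [div_sub_div_same, e3, div_div_div_eq]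
      first
        | (field_simp; ring)
        | field_simp

theorem evalS_mapS (f : X → Y) : ∀ (x : S X) (t : ℚ),
    evalS (mapS f x) t = f (evalS x t) := by
  intro x
  induction x with
  | const x => intro t; rfl
  | glue o l r ihl ihr =>
    intro t
    show (if t < o.1 then evalS (mapS f l) (t / o.1)
          else evalS (mapS f r) ((t - o.1) / (1 - o.1))) = _
    rw [evalS]
    split_ifs with h
    · exact ihl _
    · exact ihr _

theorem evalS_ap : ∀ (F : S (X → Y)) (x : S X) (t : ℚ),
    evalS (ap F x) t = evalS F t (evalS x t) := by
  intro F
  induction F with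
  | const f => intro x t; exact evalS_mapS f x t
  | glue o fl fr ihl ihr =>
    intro x t
    show (if t < o.1 then evalS (ap fl (splitL x o)) (t / o.1)
          else evalS (ap fr (splitR x o)) ((t - o.1) / (1 - o.1))) = _
    rw [evalS]
    split_ifs with h
    · rw [ihl, evalS_splitL x o t h]
    · rw [ihr, evalS_splitR x o t (not_lt.1 h)]

theorem evalS_map2 (R : X → Y → Z) (a : S X) (b : S Y) (t : ℚ) :
    evalS (map2 R a b) t = R (evalS a t) (evalS b t) := by
  rw [map2, evalS_ap, evalS_mapS]

theorem evalS_of_foldStar : ∀ (p : S Prop), foldStar p →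
    ∀ t : ℚ, 0 ≤ t → t < 1 → evalS p t := by
  intro p
  induction p with
  | const x => intro hp t _ _; exact hp
  | glue o l r ihl ihr =>
    intro hp t ht0 ht1
    obtain ⟨ho0, ho1⟩ := o.2
    obtain ⟨h1, h2⟩ := hp
    rw [evalS]
    split_ifs with h
    · exact ihl h1 _ (div_nonneg ht0 ho0.le) ((div_lt_one ho0).2 h)
    · exact ihr h2 _ (div_nonneg (by linarith [not_lt.1 h]) (by linarith))
        ((div_lt_one (by linarith)).2 (by linarith))

theorem foldStar_of : ∀ (p : S Prop),
    (∀ t : ℚ, 0 ≤ t → t < 1 → evalS p t) → foldStar p := by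
  intro p
  induction p with
  | const x => intro H; exact H 0 le_rfl one_pos
  | glue o l r ihl ihr =>
    intro H
    obtain ⟨ho0, ho1⟩ := o.2
    constructor
    · apply ihl
      intro s hs0 hs1
      have h := H (s * o.1) (by positivity) (by nlinarith)
      rw [evalS, if_pos (by nlinarith)] at h
      rwa [mul_div_cancel_right₀ s (ne_of_gt ho0)] at h
    · apply ihr
      intro s hs0 hs1
      have h := H (o.1 + s * (1 - o.1)) (by nlinarith) (by nlinarith)
      rw [evalS, if_neg (by nlinarith)] at h
      have e : (o.1 + s * (1 - o.1) - o.1) / (1 - o.1) = s := by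
        rw [add_sub_cancel_left, mul_div_cancel_right₀ s (ne_of_gt (by linarith : (0:ℚ) < 1 - o.1))]
      rwa [e] at h

end PfAux

/-- The pointwise order lifted to rational step functions is transitive. -/
theorem step_le_trans (f g h : S ℚ) :
    foldStar (map2 (· ≤ ·) f g) → foldStar (map2 (· ≤ ·) g h) →
    foldStar (map2 (· ≤ ·) f h) := by
  intro h1 h2
  apply foldStar_of
  intro t ht0 ht1
  rw [evalS_map2]
  have e1 := evalS_of_foldStar _ h1 t ht0 ht1
  have e2 := evalS_of_foldStar _ h2 t ht0 ht1
  rw [evalS_map2] at e1 e2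
  exact le_trans e1 e2
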